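/- Attainment of the Dirichlet condition at nondegenerate boundary vertices: assume the steady assumptions. Let u ∈ USC(Γ) be a viscosity subsolution and v ∈ LSC(Γ) a viscosity supersolution of problem (P). If a_i(v_i) > 0 for some 1 ≤ i ≤ N, then u(v_i) ≤ h_i ≤ v(v_i). -/

import Mathlib

open Set Filter Topology

namespace Paper

/-- Data of the junction problem (P): a junction with `N` edges of lengths `ℓ i`,
glued at the junction point `O` (parameter `0` of each edge), with a (possibly
degenerate) diffusion `a i`, Hamiltonians `H i`, a Kirchhoff nonlinearity `F`,
Dirichlet data `h i` and a constant `lam > 0`.  Functions on the junction `Γ`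
are represented edge-wise: `u : Fin N → ℝ → ℝ`, where only the values of
`u i` on `[0, ℓ i]` are relevant and `u i 0` represents the value at `O`. -/
structure Data (N : ℕ) where
  ℓ : Fin N → ℝ
  ℓ_pos : ∀ i, 0 < ℓ i
  lam : ℝ
  lam_pos : 0 < lam
  a : Fin N → ℝ → ℝ
  a_nonneg : ∀ i, ∀ t ∈ Set.Icc (0:ℝ) (ℓ i), 0 ≤ a i t
  a_cont : ∀ i, ContinuousOn (a i) (Set.Icc 0 (ℓ i))
  H : Fin N → ℝ → ℝ → ℝ
  H_cont : ∀ i, ContinuousOn (fun q : ℝ × ℝ => H i q.1 q.2)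
      ((Set.Icc 0 (ℓ i)) ×ˢ (Set.univ : Set ℝ))
  F : ℝ → (Fin N → ℝ) → ℝ
  F_cont : Continuous (fun q : ℝ × (Fin N → ℝ) => F q.1 q.2)
  h : Fin N → ℝ

variable {N : ℕ}

/-- A family of edge functions defines a function on `Γ`: values at `O` agree. -/
def Glued (u : Fin N → ℝ → ℝ) : Prop := ∀ i j : Fin N, u i 0 = u j 0

/-- `u ∈ USC(Γ)`. -/
def IsUSC (D : Data N) (u : Fin N → ℝ → ℝ) : Prop :=
  ∀ i, UpperSemicontinuousOn (u i) (Set.Icc 0 (D.ℓ i))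

/-- `u ∈ LSC(Γ)`. -/
def IsLSC (D : Data N) (u : Fin N → ℝ → ℝ) : Prop :=
  ∀ i, LowerSemicontinuousOn (u i) (Set.Icc 0 (D.ℓ i))

/-- Test functions in `C²(Γ)` (edge-wise C², glued at `O`). -/
def IsTest (φ : Fin N → ℝ → ℝ) : Prop :=
  Glued φ ∧ ∀ i, ContDiff ℝ 2 (φ i)

/-- `G_i(r,p,X,x) = λ r − a_i(x) X + H_i(x,p)`. -/
def G (D : Data N) (i : Fin N) (r p X t : ℝ) : ℝ :=
  D.lam * r - D.a i t * X + D.H i t p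

/-- Local maximum point of an edge-wise function at an interior edge point. -/
def LocalMaxEdge (D : Data N) (w : Fin N → ℝ → ℝ) (i : Fin N) (t : ℝ) : Prop :=
  ∃ δ > 0, ∀ s ∈ Set.Icc (0:ℝ) (D.ℓ i), |s - t| < δ → w i s ≤ w i t

def LocalMinEdge (D : Data N) (w : Fin N → ℝ → ℝ) (i : Fin N) (t : ℝ) : Prop :=
  ∃ δ > 0, ∀ s ∈ Set.Icc (0:ℝ) (D.ℓ i), |s - t| < δ → w i t ≤ w i s

/-- Local maximum point at the junction point `O`. -/
def LocalMaxO (D : Data N) (w : Fin N → ℝ → ℝ) : Prop :=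
  ∃ δ > 0, ∀ j, ∀ s ∈ Set.Icc (0:ℝ) (D.ℓ j), s < δ → w j s ≤ w j 0

def LocalMinO (D : Data N) (w : Fin N → ℝ → ℝ) : Prop :=
  ∃ δ > 0, ∀ j, ∀ s ∈ Set.Icc (0:ℝ) (D.ℓ j), s < δ → w j 0 ≤ w j s

/-- Local maximum point at the boundary vertex `v_i` (parameter `ℓ i`). -/
def LocalMaxVert (D : Data N) (w : Fin N → ℝ → ℝ) (i : Fin N) : Prop :=
  ∃ δ > 0, ∀ s ∈ Set.Icc (0:ℝ) (D.ℓ i), D.ℓ i - s < δ → w i s ≤ w i (D.ℓ i)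

def LocalMinVert (D : Data N) (w : Fin N → ℝ → ℝ) (i : Fin N) : Prop :=
  ∃ δ > 0, ∀ s ∈ Set.Icc (0:ℝ) (D.ℓ i), D.ℓ i - s < δ → w i (D.ℓ i) ≤ w i s

/-- Viscosity subsolution of problem (P), junction viscosity sense. -/
def IsSubsol (D : Data N) (u : Fin N → ℝ → ℝ) : Prop :=
  IsUSC D u ∧ Glued u ∧
  ∀ φ : Fin N → ℝ → ℝ, IsTest φ →
    ((∀ i, ∀ t ∈ Set.Ioo (0:ℝ) (D.ℓ i),
        LocalMaxEdge D (fun j s => u j s - φ j s) i t →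
        G D i (u i t) (deriv (φ i) t) (deriv (deriv (φ i)) t) t ≤ 0) ∧
     (LocalMaxO D (fun j s => u j s - φ j s) →
        (∃ i, G D i (u i 0) (deriv (φ i) 0) (deriv (deriv (φ i)) 0) 0 ≤ 0) ∨
        (∀ i, D.F (u i 0) (fun j => deriv (φ j) 0) ≤ 0)) ∧
     (∀ i, LocalMaxVert D (fun j s => u j s - φ j s) i →
        G D i (u i (D.ℓ i)) (deriv (φ i) (D.ℓ i)) (deriv (deriv (φ i)) (D.ℓ i)) (D.ℓ i) ≤ 0 ∨
        u i (D.ℓ i) ≤ D.h i))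

/-- Viscosity supersolution of problem (P), junction viscosity sense. -/
def IsSupersol (D : Data N) (v : Fin N → ℝ → ℝ) : Prop :=
  IsLSC D v ∧ Glued v ∧
  ∀ φ : Fin N → ℝ → ℝ, IsTest φ →
    ((∀ i, ∀ t ∈ Set.Ioo (0:ℝ) (D.ℓ i),
        LocalMinEdge D (fun j s => v j s - φ j s) i t →
        0 ≤ G D i (v i t) (deriv (φ i) t) (deriv (deriv (φ i)) t) t) ∧
     (LocalMinO D (fun j s => v j s - φ j s) →
        (∃ i, 0 ≤ G D i (v i 0) (deriv (φ i) 0) (deriv (deriv (φ i)) 0) 0) ∨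
        (∀ i, 0 ≤ D.F (v i 0) (fun j => deriv (φ j) 0))) ∧
     (∀ i, LocalMinVert D (fun j s => v j s - φ j s) i →
        0 ≤ G D i (v i (D.ℓ i)) (deriv (φ i) (D.ℓ i)) (deriv (deriv (φ i)) (D.ℓ i)) (D.ℓ i) ∨
        D.h i ≤ v i (D.ℓ i)))

/-- Assumption (Ham) for the Hamiltonian `H i`, with constant `C`. -/
def Ham (D : Data N) (C : ℝ) (i : Fin N) : Prop :=
  (∀ t ∈ Set.Icc (0:ℝ) (D.ℓ i), ∀ s ∈ Set.Icc (0:ℝ) (D.ℓ i), ∀ p : ℝ,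
      |D.H i t p - D.H i s p| ≤ C * (1 + |p|) * |t - s|) ∧
  (∀ t ∈ Set.Icc (0:ℝ) (D.ℓ i), ∀ p q : ℝ, |D.H i t p - D.H i t q| ≤ C * |p - q|)

/-- Assumption (Hcoercive) for `H i` on the set `S`, with constant `C`. -/
def Coercive (D : Data N) (C : ℝ) (i : Fin N) (S : Set ℝ) : Prop :=
  ∀ t ∈ S, ∀ p : ℝ, C⁻¹ * |p| - C ≤ D.H i t p

/-- Assumption (hyp-diff) for the diffusion `a i`. -/
def HypDiff (D : Data N) (i : Fin N) : Prop :=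
  ∃ σ : ℝ → ℝ, (∃ C : NNReal, LipschitzOnWith C σ (Set.Icc 0 (D.ℓ i))) ∧
    ∀ t ∈ Set.Icc (0:ℝ) (D.ℓ i), D.a i t = (σ t) ^ 2

/-- Assumption (hyp-kirch) for the Kirchhoff nonlinearity `F`. -/
def Kirchhoff (D : Data N) : Prop :=
  (∀ (r s : ℝ) (p q : Fin N → ℝ), s ≤ r → (∀ i, p i ≤ q i) → D.F s q ≤ D.F r p) ∧
  (∀ (r s : ℝ) (p q : Fin N → ℝ), s ≤ r → (∀ i, p i ≤ q i) → (∃ j, p j < q j) →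
      D.F s q < D.F r p) ∧
  (∀ (i : Fin N) (r : ℝ) (p : Fin N → ℝ),
      Filter.Tendsto (fun z : ℝ => D.F r (Function.update p i z))
        Filter.atBot Filter.atTop)

/-- The steady assumptions (2.9). -/
def Steady (D : Data N) (C : ℝ) : Prop :=
  0 < C ∧ (∀ i, Ham D C i) ∧ (∀ i, HypDiff D i) ∧
  (∀ i, D.a i 0 = 0 → Coercive D C i (Set.Icc 0 (D.ℓ i))) ∧ Kirchhoff D

/-- Assumption (hyp-dir). -/
def HypDir (D : Data N) (C : ℝ) : Prop :=
  ∀ i, 0 < D.a i (D.ℓ i) ∨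
    ∃ δ > 0, Coercive D C i (Set.Icc (D.ℓ i - δ) (D.ℓ i))



section DirichletHelpers

private lemma usc_max' {f : ℝ → ℝ} {s : Set ℝ} (hs : IsCompact s) (hne : s.Nonempty)
    (hf : UpperSemicontinuousOn f s) : ∃ t ∈ s, ∀ x ∈ s, f x ≤ f t := by
  by_contra hcon
  push_neg at hcon
  choose! g hg1 hg2 using hcon
  have key : ∀ t (_ : t ∈ s), ∃ W : Set ℝ, IsOpen W ∧ t ∈ W ∧ ∀ z ∈ W ∩ s, f z < f (g t) := by
    intro t ht
    have h1 : ∀ᶠ z in 𝓝[s] t, f z < f (g t) := hf t ht _ (hg2 t ht)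
    rw [eventually_iff, mem_nhdsWithin] at h1
    obtain ⟨W, hWo, htW, hW⟩ := h1
    exact ⟨W, hWo, htW, fun z hz => hW hz⟩
  choose W hWo htW hW using key
  obtain ⟨q, hq⟩ := hs.elim_nhds_subcover' (fun t ht => W t ht)
    (fun t ht => (hWo t ht).mem_nhds (htW t ht))
  have hqne : q.Nonempty := by
    obtain ⟨x0, hx0⟩ := hne
    have := hq hx0
    rw [Set.mem_iUnion₂] at this
    obtain ⟨t, ht, -⟩ := this
    exact ⟨t, ht⟩
  obtain ⟨b, hbq, hb⟩ := q.exists_max_image (fun t : s => f (g t)) hqne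
  have hgb : g b ∈ s := hg1 b b.2
  have := hq hgb
  rw [Set.mem_iUnion₂] at this
  obtain ⟨c, hc, hmem⟩ := this
  have h1 : f (g b) < f (g c) := hW c c.2 _ ⟨hmem, hgb⟩
  have h2 : f (g c) ≤ f (g b) := hb c hc
  linarith

private lemma lsc_min' {f : ℝ → ℝ} {s : Set ℝ} (hs : IsCompact s) (hne : s.Nonempty)
    (hf : LowerSemicontinuousOn f s) : ∃ t ∈ s, ∀ x ∈ s, f t ≤ f x := by
  have husc : UpperSemicontinuousOn (fun x => -(f x)) s := by
    intro x hx y hy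
    have hy' : -f x < y := hy
    have := hf x hx (-y) (by linarith)
    exact this.mono fun z hz => show -f z < y by linarith
  obtain ⟨t, hts, ht⟩ := usc_max' hs hne husc
  exact ⟨t, hts, fun x hx => by have := ht x hx; simpa using by linarith⟩

private lemma quad_deriv' (p q : ℝ) :
    deriv (fun s : ℝ => p * s + q * s ^ 2) = fun t => p + 2 * q * t := by
  funext t
  have h1 : HasDerivAt (fun s : ℝ => p * s) p t := by
    simpa using (hasDerivAt_id t).const_mul p
  have h2 : HasDerivAt (fun s : ℝ => s ^ 2) (2 * t) t := by
    simpa using hasDerivAt_pow 2 t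
  have h : HasDerivAt (fun s : ℝ => p * s + q * s ^ 2) (p + q * (2 * t)) t := h1.add (h2.const_mul q)
  rw [h.deriv]; ring

private lemma affine_deriv' (c m : ℝ) : deriv (fun t : ℝ => c + m * t) = fun _ => m := by
  funext t
  have h1 : HasDerivAt (fun s : ℝ => c + m * s) m t := by
    simpa using ((hasDerivAt_id t).const_mul m).const_add c
  rw [h1.deriv]

private lemma quad_contDiff' (p q : ℝ) : ContDiff ℝ 2 (fun s : ℝ => p * s + q * s ^ 2) := by
  fun_prop

end DirichletHelpers

set_option maxHeartbeats 1000000 in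
/-- Proposition 3.4 (i), attainment of the Dirichlet condition
at nondegenerate boundary vertices.  Under the steady assumptions, if
`a_i(v_i) > 0` then `u(v_i) ≤ h_i ≤ v(v_i)` for every subsolution `u` and
supersolution `v` of (P). -/
theorem dirichlet_nondegenerate (N : ℕ) (D : Data N) (C : ℝ)
    (hSteady : Steady D C)
    (u v : Fin N → ℝ → ℝ) (hu : IsSubsol D u) (hv : IsSupersol D v)
    (i : Fin N) (hai : 0 < D.a i (D.ℓ i)) :
    u i (D.ℓ i) ≤ D.h i ∧ D.h i ≤ v i (D.ℓ i) := by
  obtain ⟨hC, hHam, -, -, -⟩ := hSteady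
  set L := D.ℓ i with hLdef
  have hLpos : 0 < L := D.ℓ_pos i
  have hlam : 0 < D.lam := D.lam_pos
  have hLmem : L ∈ Set.Icc (0:ℝ) L := ⟨hLpos.le, le_refl _⟩
  set α := D.a i L / 2 with hαdef
  have hαpos : 0 < α := half_pos hai
  have hcw : ContinuousWithinAt (D.a i) (Set.Icc 0 L) L := D.a_cont i L hLmem
  have hev : ∀ᶠ t in 𝓝[Set.Icc 0 L] L, α < D.a i t :=
    hcw (Ioi_mem_nhds (by rw [hαdef]; exact half_lt_self hai))
  rw [eventually_nhdsWithin_iff, Metric.eventually_nhds_iff] at hev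
  obtain ⟨ε, hεpos, hball⟩ := hev
  set δ := min (min (L/2) (ε/2)) (α/(8*C)) with hδdef
  have hδpos : 0 < δ := by
    rw [hδdef]
    exact lt_min (lt_min (half_pos hLpos) (half_pos hεpos)) (div_pos hαpos (by linarith))
  have hδL2 : δ ≤ L/2 := by
    rw [hδdef]; exact le_trans (min_le_left _ _) (min_le_left _ _)
  have hδε : δ < ε := by
    have h : δ ≤ ε/2 := by rw [hδdef]; exact le_trans (min_le_left _ _) (min_le_right _ _)
    linarith
  have hδα : 8*C*δ ≤ α := by
    have h1 : δ ≤ α/(8*C) := by rw [hδdef]; exact min_le_right _ _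
    rw [le_div_iff₀ (by linarith : (0:ℝ) < 8*C)] at h1
    linarith
  have hKcp : IsCompact (Set.Icc (L-δ) L) := isCompact_Icc
  have hKsub : (Set.Icc (L-δ) L) ⊆ Set.Icc 0 L := fun x hx => ⟨by have := hx.1; linarith, hx.2⟩
  have hLK : L ∈ (Set.Icc (L-δ) L) := ⟨by linarith, le_refl _⟩
  have hαa : ∀ t ∈ (Set.Icc (L-δ) L), α ≤ D.a i t := by
    intro t ht
    have hd : dist t L < ε := by
      rw [Real.dist_eq, abs_lt]
      constructor
      · have := ht.1; linarith
      · have := ht.2; linarith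
    exact (hball hd (hKsub ht)).le
  obtain ⟨hHam1, hHam2⟩ := hHam i
  set H0 := D.H i L 0 with hH0def
  have habs_tL : ∀ t ∈ (Set.Icc (L-δ) L), |t - L| ≤ δ := by
    intro t ht
    rw [abs_le]
    exact ⟨by have := ht.1; linarith, by have := ht.2; linarith⟩
  have hHlow : ∀ t ∈ (Set.Icc (L-δ) L), ∀ p : ℝ, H0 - C*δ - C*|p| ≤ D.H i t p := by
    intro t ht p
    have h1 := hHam1 t (hKsub ht) L hLmem 0
    have h2 := hHam2 t (hKsub ht) p 0
    simp only [abs_zero, add_zero, sub_zero, mul_one] at h1 h2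
    have h1' := (abs_le.mp h1).1
    have h2' := (abs_le.mp h2).1
    have h3 : C*|t-L| ≤ C*δ := mul_le_mul_of_nonneg_left (habs_tL t ht) hC.le
    linarith
  have hHhigh : ∀ t ∈ (Set.Icc (L-δ) L), ∀ p : ℝ, D.H i t p ≤ H0 + C*δ + C*|p| := by
    intro t ht p
    have h1 := hHam1 t (hKsub ht) L hLmem 0
    have h2 := hHam2 t (hKsub ht) p 0
    simp only [abs_zero, add_zero, sub_zero, mul_one] at h1 h2
    have h1' := (abs_le.mp h1).2
    have h2' := (abs_le.mp h2).2
    have h3 : C*|t-L| ≤ C*δ := mul_le_mul_of_nonneg_left (habs_tL t ht) hC.le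
    linarith
  have haL2 : D.a i L = 2*α := by rw [hαdef]; ring
  clear_value α δ H0
  constructor
  -- Part 1: subsolution
  · obtain ⟨s₀, hs₀K, hs₀max⟩ := usc_max' hKcp ⟨L, hLK⟩ ((hu.1 i).mono hKsub)
    set uL := u i L with huLdef
    have hK₀ : uL ≤ u i s₀ := hs₀max L hLK
    obtain ⟨n, hn⟩ := exists_gt (max (max 1 ((u i s₀ - uL)/(δ*δ))) ((C*δ - D.lam*uL - H0)/α))
    have hn1 : (1:ℝ) < n := ((le_max_left _ _).trans (le_max_left _ _)).trans_lt hn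
    have hnpos : (0:ℝ) < n := by linarith
    have hn2 : u i s₀ - uL < n*(δ*δ) := by
      have h := ((le_max_right 1 _).trans (le_max_left _ _)).trans_lt hn
      rw [div_lt_iff₀ (by nlinarith : (0:ℝ) < δ*δ)] at h
      linarith
    have hn3 : C*δ - D.lam*uL - H0 < n*α := by
      have h := (le_max_right _ _).trans_lt hn
      rw [div_lt_iff₀ hαpos] at h
      linarith
    clear_value uL
    obtain ⟨hint, -, hvert⟩ := hu.2.2 (fun _ s => (2*n*L - 2*n*δ)*s + (-n)*s^2)
      ⟨fun _ _ => rfl, fun _ => quad_contDiff' _ _⟩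
    have husc : UpperSemicontinuousOn
        (fun s => u i s - ((2*n*L - 2*n*δ)*s + (-n)*s^2)) (Set.Icc (L-δ) L) := by
      have h1 : (fun s => u i s - ((2*n*L - 2*n*δ)*s + (-n)*s^2))
          = fun s => u i s + (-((2*n*L - 2*n*δ)*s + (-n)*s^2)) := by funext s; ring
      rw [h1]
      exact ((hu.1 i).mono hKsub).add
        ((quad_contDiff' (2*n*L - 2*n*δ) (-n)).continuous.neg.continuousOn.upperSemicontinuousOn)
    obtain ⟨t, htK, hmax⟩ := usc_max' hKcp ⟨L, hLK⟩ husc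
    have htL : t ≤ L := htK.2
    have htLδ : L - δ ≤ t := htK.1
    have hmaxL := hmax L hLK
    -- key penalization estimate:  n*δ*(L-t) ≤ u i t - uL
    have hprod : 0 ≤ n*((L-t)*(δ-(L-t))) :=
      mul_nonneg hnpos.le (mul_nonneg (by linarith) (by linarith))
    have hpen : n*δ*(L-t) ≤ u i t - uL := by nlinarith [hmaxL, hprod]
    have huLt : uL ≤ u i t := by nlinarith [hpen, mul_nonneg (mul_nonneg hnpos.le hδpos.le) (sub_nonneg.mpr htL)]
    have hLtδ : L - t < δ := by
      have hut : u i t ≤ u i s₀ := hs₀max t htK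
      have h : (n*δ)*(L-t) < (n*δ)*δ := by nlinarith [hpen]
      exact lt_of_mul_lt_mul_left h (by positivity)
    rcases eq_or_lt_of_le htL with htEq | htLt
    · -- max at the vertex
      have hlocv : LocalMaxVert D (fun j s => u j s - ((2*n*L - 2*n*δ)*s + (-n)*s^2)) i := by
        refine ⟨δ, hδpos, fun s hs hls => ?_⟩
        have := hmax s ⟨by linarith [hs.2], hs.2⟩
        rw [htEq] at this
        exact this
      rcases hvert i hlocv with hG | hdone
      · exfalso
        simp only [quad_deriv', affine_deriv', G] at hG
        have harg : 2*n*L - 2*n*δ + 2*(-n)*L = -(2*n*δ) := by ring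
        rw [harg] at hG
        have hHn := hHlow L hLK (-(2*n*δ))
        rw [abs_neg, abs_of_nonneg (by positivity : (0:ℝ) ≤ 2*n*δ)] at hHn
        have h8 : 8*C*δ*n ≤ α*n := mul_le_mul_of_nonneg_right hδα hnpos.le
        nlinarith [hG, hHn, hn3, haL2, mul_pos hαpos hnpos]
      · rw [huLdef, hLdef]; exact hdone
    · -- max in the interior
      exfalso
      have ht0 : 0 < t := by linarith
      have hloc : LocalMaxEdge D (fun j s => u j s - ((2*n*L - 2*n*δ)*s + (-n)*s^2)) i t := by
        refine ⟨t - (L-δ), by linarith, fun s hs habs => ?_⟩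
        have h1 := (abs_lt.mp habs).1
        exact hmax s ⟨by linarith, hs.2⟩
      have hG := hint i t ⟨ht0, htLt⟩ hloc
      simp only [quad_deriv', affine_deriv', G] at hG
      have harg : 2*n*L - 2*n*δ + 2*(-n)*t = -(2*n*δ - 2*n*(L-t)) := by ring
      rw [harg] at hG
      have hnLtδ : n*(L-t) ≤ n*δ := mul_le_mul_of_nonneg_left (by linarith) hnpos.le
      have hHn := hHlow t htK (-(2*n*δ - 2*n*(L-t)))
      rw [abs_neg, abs_of_nonneg (by nlinarith : (0:ℝ) ≤ 2*n*δ - 2*n*(L-t))] at hHn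
      have h8 : 8*C*δ*n ≤ α*n := mul_le_mul_of_nonneg_right hδα hnpos.le
      have hat : α*n ≤ (D.a i t)*n := mul_le_mul_of_nonneg_right (hαa t htK) hnpos.le
      have hlam_le : D.lam * uL ≤ D.lam * u i t := mul_le_mul_of_nonneg_left huLt hlam.le
      nlinarith [hG, hHn, hn3, hlam_le, hat, h8, mul_pos hαpos hnpos,
        mul_nonneg hC.le (mul_nonneg (by linarith : (0:ℝ) ≤ 2*n) (by linarith : (0:ℝ) ≤ L-t))]
  -- Part 2: supersolution
  · obtain ⟨s₁, hs₁K, hs₁min⟩ := lsc_min' hKcp ⟨L, hLK⟩ ((hv.1 i).mono hKsub)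
    set vL := v i L with hvLdef
    have hK₁ : v i s₁ ≤ vL := hs₁min L hLK
    obtain ⟨n, hn⟩ := exists_gt (max (max 1 ((vL - v i s₁)/(δ*δ))) ((D.lam*vL + H0 + C*δ)/α))
    have hn1 : (1:ℝ) < n := ((le_max_left _ _).trans (le_max_left _ _)).trans_lt hn
    have hnpos : (0:ℝ) < n := by linarith
    have hn2 : vL - v i s₁ < n*(δ*δ) := by
      have h := ((le_max_right 1 _).trans (le_max_left _ _)).trans_lt hn
      rw [div_lt_iff₀ (by nlinarith : (0:ℝ) < δ*δ)] at h
      linarith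
    have hn3 : D.lam*vL + H0 + C*δ < n*α := by
      have h := (le_max_right _ _).trans_lt hn
      rw [div_lt_iff₀ hαpos] at h
      linarith
    clear_value vL
    obtain ⟨hint, -, hvert⟩ := hv.2.2 (fun _ s => (2*n*δ - 2*n*L)*s + n*s^2)
      ⟨fun _ _ => rfl, fun _ => quad_contDiff' _ _⟩
    have hlsc : LowerSemicontinuousOn
        (fun s => v i s - ((2*n*δ - 2*n*L)*s + n*s^2)) (Set.Icc (L-δ) L) := by
      have h1 : (fun s => v i s - ((2*n*δ - 2*n*L)*s + n*s^2))
          = fun s => v i s + (-((2*n*δ - 2*n*L)*s + n*s^2)) := by funext s; ring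
      rw [h1]
      exact ((hv.1 i).mono hKsub).add
        ((quad_contDiff' (2*n*δ - 2*n*L) n).continuous.neg.continuousOn.lowerSemicontinuousOn)
    obtain ⟨t, htK, hmin⟩ := lsc_min' hKcp ⟨L, hLK⟩ hlsc
    have htL : t ≤ L := htK.2
    have htLδ : L - δ ≤ t := htK.1
    have hminL := hmin L hLK
    have hprod : 0 ≤ n*((L-t)*(δ-(L-t))) :=
      mul_nonneg hnpos.le (mul_nonneg (by linarith) (by linarith))
    have hpen : n*δ*(L-t) ≤ vL - v i t := by nlinarith [hminL, hprod]
    have hvt : v i t ≤ vL := by nlinarith [hpen, mul_nonneg (mul_nonneg hnpos.le hδpos.le) (sub_nonneg.mpr htL)]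
    have hLtδ : L - t < δ := by
      have hvt' : v i s₁ ≤ v i t := hs₁min t htK
      have h : (n*δ)*(L-t) < (n*δ)*δ := by nlinarith [hpen]
      exact lt_of_mul_lt_mul_left h (by positivity)
    rcases eq_or_lt_of_le htL with htEq | htLt
    · -- min at the vertex
      have hlocv : LocalMinVert D (fun j s => v j s - ((2*n*δ - 2*n*L)*s + n*s^2)) i := by
        refine ⟨δ, hδpos, fun s hs hls => ?_⟩
        have := hmin s ⟨by linarith [hs.2], hs.2⟩
        rw [htEq] at this
        exact this
      rcases hvert i hlocv with hG | hdone
      · exfalso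
        simp only [quad_deriv', affine_deriv', G] at hG
        have harg : 2*n*δ - 2*n*L + 2*n*L = 2*n*δ := by ring
        rw [harg] at hG
        have hHn := hHhigh L hLK (2*n*δ)
        rw [abs_of_nonneg (by positivity : (0:ℝ) ≤ 2*n*δ)] at hHn
        have h8 : 8*C*δ*n ≤ α*n := mul_le_mul_of_nonneg_right hδα hnpos.le
        nlinarith [hG, hHn, hn3, haL2, mul_pos hαpos hnpos]
      · rw [hvLdef, hLdef]; exact hdone
    · -- min in the interior
      exfalso
      have ht0 : 0 < t := by linarith
      have hloc : LocalMinEdge D (fun j s => v j s - ((2*n*δ - 2*n*L)*s + n*s^2)) i t := by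
        refine ⟨t - (L-δ), by linarith, fun s hs habs => ?_⟩
        have h1 := (abs_lt.mp habs).1
        exact hmin s ⟨by linarith, hs.2⟩
      have hG := hint i t ⟨ht0, htLt⟩ hloc
      simp only [quad_deriv', affine_deriv', G] at hG
      have harg : 2*n*δ - 2*n*L + 2*n*t = 2*n*δ - 2*n*(L-t) := by ring
      rw [harg] at hG
      have hnLtδ : n*(L-t) ≤ n*δ := mul_le_mul_of_nonneg_left (by linarith) hnpos.le
      have hHn := hHhigh t htK (2*n*δ - 2*n*(L-t))
      rw [abs_of_nonneg (by nlinarith : (0:ℝ) ≤ 2*n*δ - 2*n*(L-t))] at hHn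
      have h8 : 8*C*δ*n ≤ α*n := mul_le_mul_of_nonneg_right hδα hnpos.le
      have hat : α*n ≤ (D.a i t)*n := mul_le_mul_of_nonneg_right (hαa t htK) hnpos.le
      have hlam_le : D.lam * v i t ≤ D.lam * vL := mul_le_mul_of_nonneg_left hvt hlam.le
      nlinarith [hG, hHn, hn3, hlam_le, hat, h8, mul_pos hαpos hnpos,
        mul_nonneg hC.le (mul_nonneg (by linarith : (0:ℝ) ≤ 2*n) (by linarith : (0:ℝ) ≤ L-t))]

end Paper
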